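/- Let n ≥ 3 be an integer and let d > 0 be a real number. Let G be a simple graph on n vertices such that: (a) every pair of distinct vertices of G is joined by fewer than d/2400 paths of length 2; (b) every vertex of G has degree at most 4d; (c) every set A of ⌈n/3⌉ vertices of G induces at least nd/25 edges. Then every orientation of G contains a vertex v with |N2(v)| > 4d; in particular, every orientation of G contains a Sullivan vertex. -/

import Mathlib

open Filter

/-- The outneighbourhood `N1(v)` of `v` in the digraph with arc relation `D`. -/
def outNbr {V : Type*} (D : V → V → Prop) (v : V) : Set V := {w | w ≠ v ∧ D v w}

/-- The inneighbourhood `N⁻(v)` of `v`. -/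
def inNbr {V : Type*} (D : V → V → Prop) (v : V) : Set V := {w | w ≠ v ∧ D w v}

/-- The second outneighbourhood `N2(v)` of `v`. -/
def outNbr2 {V : Type*} (D : V → V → Prop) (v : V) : Set V :=
  {w | w ∉ insert v (outNbr D v) ∧ ∃ u ∈ outNbr D v, D u w}

/-- `v` is a Seymour vertex: `|N2(v)| ≥ |N1(v)|`. -/
def SeymourVertex {V : Type*} (D : V → V → Prop) (v : V) : Prop :=
  (outNbr D v).ncard ≤ (outNbr2 D v).ncard

/-- `v` is a Sullivan vertex: `|N2(v)| ≥ |N⁻(v)|`. -/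
def SullivanVertex {V : Type*} (D : V → V → Prop) (v : V) : Prop :=
  (inNbr D v).ncard ≤ (outNbr2 D v).ncard

/-- An oriented graph: an asymmetric (hence irreflexive and loopless) arc relation. -/
def OrientedGraph {V : Type*} (D : V → V → Prop) : Prop := ∀ u v, D u v → ¬ D v u

/-- `D` is an orientation of the simple graph `G`. -/
def Orients {V : Type*} (D : V → V → Prop) (G : SimpleGraph V) : Prop :=
  OrientedGraph D ∧ ∀ u v, G.Adj u v ↔ (D u v ∨ D v u)

/-- Strong connectivity of a digraph: every vertex reaches every other by a directed path. -/
def StrongConn {V : Type*} (D : V → V → Prop) : Prop := ∀ u v, Relation.ReflTransGen D u v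

/-- The number of edges of `G` with one endpoint in `A` and the other in `B`
(counted via ordered pairs; equals `e(A,B)` for disjoint `A`, `B`). -/
noncomputable def eBtw {V : Type*} (G : SimpleGraph V) (A B : Set V) : ℕ :=
  {p : V × V | p.1 ∈ A ∧ p.2 ∈ B ∧ G.Adj p.1 p.2}.ncard

/-- The number of edges of `G` with both endpoints in `A`. -/
noncomputable def eIn {V : Type*} (G : SimpleGraph V) (A : Set V) : ℕ :=
  {e | e ∈ G.edgeSet ∧ ∀ v ∈ e, v ∈ A}.ncard

open scoped Classical in
/-- The probability that the binomial random graph `G(n,p)` satisfies the property `P`. -/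
noncomputable def gnpProb (n : ℕ) (p : ℝ) (P : SimpleGraph (Fin n) → Prop) : ℝ :=
  ∑ G : SimpleGraph (Fin n),
    if P G then p ^ G.edgeSet.ncard * (1 - p) ^ (n.choose 2 - G.edgeSet.ncard) else 0


namespace Stmt16Aux
open Finset
open scoped Classical
variable {n : ℕ}

noncomputable def NoutF (D : Fin n → Fin n → Prop) (v : Fin n) : Finset (Fin n) :=
  univ.filter fun w => w ≠ v ∧ D v w
noncomputable def NinF (D : Fin n → Fin n → Prop) (v : Fin n) : Finset (Fin n) :=
  univ.filter fun w => w ≠ v ∧ D w v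
noncomputable def N2F (D : Fin n → Fin n → Prop) (v : Fin n) : Finset (Fin n) :=
  univ.filter fun w => w ∈ outNbr2 D v
noncomputable def CodF (G : SimpleGraph (Fin n)) (u v : Fin n) : Finset (Fin n) :=
  univ.filter fun w => w ≠ u ∧ w ≠ v ∧ G.Adj u w ∧ G.Adj w v


lemma ncard_outNbr2 (D : Fin n → Fin n → Prop) (v : Fin n) :
    (outNbr2 D v).ncard = (N2F D v).card := by
  rw [show outNbr2 D v = ↑(N2F D v) by ext w; simp [N2F], Set.ncard_coe_finset]

lemma ncard_Cod (G : SimpleGraph (Fin n)) (u v : Fin n) :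
    ({w | w ≠ u ∧ w ≠ v ∧ G.Adj u w ∧ G.Adj w v}).ncard = (CodF G u v).card := by
  rw [show {w | w ≠ u ∧ w ≠ v ∧ G.Adj u w ∧ G.Adj w v} = ↑(CodF G u v) by ext w; simp [CodF],
    Set.ncard_coe_finset]

lemma ncard_nbhd (G : SimpleGraph (Fin n)) (v : Fin n) :
    (G.neighborSet v).ncard = ((univ.filter fun w => G.Adj v w : Finset (Fin n))).card := by
  rw [show G.neighborSet v = ↑(univ.filter fun w => G.Adj v w : Finset (Fin n)) by
    ext w; simp [SimpleGraph.mem_neighborSet], Set.ncard_coe_finset]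

lemma eIn_le_arcs (D : Fin n → Fin n → Prop) (G : SimpleGraph (Fin n)) (hD : Orients D G)
    (A : Finset (Fin n)) :
    eIn G ↑A ≤ ((A ×ˢ A).filter fun p => D p.1 p.2).card := by
  set AF := (A ×ˢ A).filter fun p => D p.1 p.2 with hAF
  have h1 : {e | e ∈ G.edgeSet ∧ ∀ v ∈ e, v ∈ (↑A : Set (Fin n))}
      ⊆ Sym2.mk.uncurry '' (↑AF : Set (Fin n × Fin n)) := by
    intro e he
    induction e using Sym2.inductionOn with
    | hf u w =>
      obtain ⟨hadj, hmem⟩ := he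
      rw [SimpleGraph.mem_edgeSet] at hadj
      have hu : u ∈ A := by simpa using hmem u (Sym2.mem_mk_left u w)
      have hw : w ∈ A := by simpa using hmem w (Sym2.mem_mk_right u w)
      rcases (hD.2 u w).mp hadj with h | h
      · exact ⟨(u, w), by simp [hAF, hu, hw, h], rfl⟩
      · exact ⟨(w, u), by simp [hAF, hu, hw, h], Sym2.eq_swap⟩
  calc eIn G ↑A = ({e | e ∈ G.edgeSet ∧ ∀ v ∈ e, v ∈ (↑A : Set (Fin n))}).ncard := rfl
    _ ≤ (Sym2.mk.uncurry '' (↑AF : Set (Fin n × Fin n))).ncard :=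
        Set.ncard_le_ncard h1 ((AF.finite_toSet).image _)
    _ ≤ (↑AF : Set (Fin n × Fin n)).ncard := Set.ncard_image_le AF.finite_toSet
    _ = AF.card := Set.ncard_coe_finset _

lemma eIn_le_sum_dplus (D : Fin n → Fin n → Prop) (G : SimpleGraph (Fin n)) (hD : Orients D G)
    (A : Finset (Fin n)) :
    eIn G ↑A ≤ ∑ a ∈ A, (NoutF D a).card := by
  refine le_trans (eIn_le_arcs D G hD A) ?_
  have h : ((A ×ˢ A).filter fun p => D p.1 p.2).card
      = ∑ a ∈ A, (A.filter fun w => D a w).card := by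
    simp only [Finset.card_filter]
    rw [Finset.sum_product]
  rw [h]
  refine Finset.sum_le_sum fun a _ => Finset.card_le_card fun w hw => ?_
  rw [Finset.mem_filter] at hw
  have hne : w ≠ a := by rintro rfl; exact hD.1 _ _ hw.2 hw.2
  simp [NoutF, hne, hw.2]

lemma eIn_le_sum_dminus (D : Fin n → Fin n → Prop) (G : SimpleGraph (Fin n)) (hD : Orients D G)
    (A : Finset (Fin n)) :
    eIn G ↑A ≤ ∑ a ∈ A, (NinF D a).card := by
  refine le_trans (eIn_le_arcs D G hD A) ?_
  have h : ((A ×ˢ A).filter fun p => D p.1 p.2).card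
      = ∑ w ∈ A, (A.filter fun u => D u w).card := by
    simp only [Finset.card_filter]
    rw [Finset.sum_product]
    exact Finset.sum_comm
  rw [h]
  refine Finset.sum_le_sum fun w _ => Finset.card_le_card fun u hu => ?_
  rw [Finset.mem_filter] at hu
  have hne : u ≠ w := by rintro rfl; exact hD.1 _ _ hu.2 hu.2
  simp [NinF, hne, hu.2]


lemma swap_count {α β : Type*} (s : Finset α) (t : Finset β) (R : α → β → Prop) :
    ∑ u ∈ s, (t.filter fun w => R u w).card = ∑ w ∈ t, (s.filter fun u => R u w).card := by
  simp only [card_filter]; exact Finset.sum_comm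

/-- Key per-vertex bound: `∑_{u ∈ N1(v)} d⁺(u) ≤ d²/400`. -/
lemma sum_dplus_le (D : Fin n → Fin n → Prop) (G : SimpleGraph (Fin n)) (hD : Orients D G)
    (d : ℝ) (hd : 0 < d)
    (hcod : ∀ u v : Fin n, u ≠ v → ((CodF G u v).card : ℝ) ≤ d / 2400)
    (hdeg : ∀ v, ((univ.filter fun w => G.Adj v w : Finset (Fin n)).card : ℝ) ≤ 4 * d)
    (hN2 : ∀ v, ((N2F D v).card : ℝ) ≤ 4 * d)
    (v : Fin n) :
    ∑ u ∈ NoutF D v, ((NoutF D u).card : ℝ) ≤ d ^ 2 / 400 := by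
  have hasym : ∀ a b, D a b → ¬ D b a := hD.1
  have hadj : ∀ a b, D a b → G.Adj a b := fun a b h => (hD.2 a b).mpr (Or.inl h)
  set S := NoutF D v with hS
  have hmemS : ∀ w, w ∈ S ↔ (w ≠ v ∧ D v w) := by intro w; simp [hS, NoutF]
  have hScard : (S.card : ℝ) ≤ 4 * d := by
    refine le_trans ?_ (hdeg v)
    have : S ⊆ univ.filter fun w => G.Adj v w := by
      intro w hw; rcases (hmemS w).mp hw with ⟨_, h2⟩
      simp [hadj _ _ h2]
    exact_mod_cast Finset.card_le_card this
  have hsplit : ∀ u : Fin n, (NoutF D u).card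
      = (NoutF D u ∩ S).card + (NoutF D u \ S).card :=
    fun u => (Finset.card_inter_add_card_sdiff _ _).symm
  -- Part 1 : arcs inside S
  have hrew : ∀ u, NoutF D u ∩ S = S.filter fun w => w ≠ u ∧ D u w := by
    intro u; ext w
    simp only [NoutF, Finset.mem_inter, Finset.mem_filter, Finset.mem_univ, true_and]
    tauto
  have e1 : ∑ u ∈ S, (NoutF D u ∩ S).card
      = ∑ w ∈ S, (S.filter fun x => x ≠ w ∧ D w x).card :=
    Finset.sum_congr rfl fun w _ => by rw [hrew w]
  have hswap : ∑ u ∈ S, (NoutF D u ∩ S).card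
      = ∑ w ∈ S, (S.filter fun u => w ≠ u ∧ D u w).card := by
    rw [e1]
    simp only [Finset.card_filter]
    exact Finset.sum_comm
  have hkey : ∀ w ∈ S, (S.filter fun x => x ≠ w ∧ D w x).card
      + (S.filter fun u => w ≠ u ∧ D u w).card ≤ (CodF G w v).card := by
    intro w hw
    rcases (hmemS w).mp hw with ⟨hwv, hvw⟩
    have hdis : Disjoint (S.filter fun x => x ≠ w ∧ D w x)
        (S.filter fun u => w ≠ u ∧ D u w) := by
      rw [Finset.disjoint_left]
      intro x h1 h2
      simp only [Finset.mem_filter] at h1 h2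
      exact hasym _ _ h1.2.2 h2.2.2
    rw [← Finset.card_union_of_disjoint hdis]
    apply Finset.card_le_card
    intro x hx
    simp only [Finset.mem_union, Finset.mem_filter] at hx
    have hxS : x ∈ S := by rcases hx with ⟨h, _⟩ | ⟨h, _⟩ <;> exact h
    rcases (hmemS x).mp hxS with ⟨hxv, hvx⟩
    simp only [CodF, Finset.mem_filter, Finset.mem_univ, true_and]
    rcases hx with ⟨_, hxw, hDwx⟩ | ⟨_, hxw, hDxw⟩
    · exact ⟨hxw, hxv, hadj _ _ hDwx, (hadj _ _ hvx).symm⟩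
    · exact ⟨hxw.symm, hxv, (hadj _ _ hDxw).symm, (hadj _ _ hvx).symm⟩
  have hsum2 : ∑ w ∈ S, ((S.filter fun x => x ≠ w ∧ D w x).card
      + (S.filter fun u => w ≠ u ∧ D u w).card)
      = 2 * ∑ u ∈ S, (NoutF D u ∩ S).card := by
    rw [Finset.sum_add_distrib, ← e1, ← hswap, two_mul]
  have h2n : 2 * (∑ u ∈ S, (NoutF D u ∩ S).card) ≤ ∑ w ∈ S, (CodF G w v).card := by
    rw [← hsum2]; exact Finset.sum_le_sum hkey
  have hP1 : (∑ u ∈ S, ((NoutF D u ∩ S).card : ℝ)) ≤ d ^ 2 / 1200 := by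
    have hc2 : (2:ℝ) * ∑ u ∈ S, ((NoutF D u ∩ S).card : ℝ)
        ≤ ∑ w ∈ S, ((CodF G w v).card : ℝ) := by exact_mod_cast h2n
    have hc3 : ∑ w ∈ S, ((CodF G w v).card : ℝ) ≤ S.card * (d / 2400) := by
      calc ∑ w ∈ S, ((CodF G w v).card : ℝ) ≤ ∑ _w ∈ S, (d / 2400) :=
          Finset.sum_le_sum fun w hw => hcod w v ((hmemS w).mp hw).1
        _ = S.card * (d / 2400) := by rw [Finset.sum_const, nsmul_eq_mul]
    have hc4 : (S.card : ℝ) * (d / 2400) ≤ (4 * d) * (d / 2400) :=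
      mul_le_mul_of_nonneg_right hScard (by positivity)
    nlinarith [hc2, hc3, hc4]
  -- Part 2 : arcs leaving S land in N2(v)
  have hP2 : (∑ u ∈ S, ((NoutF D u \ S).card : ℝ)) ≤ d ^ 2 / 600 := by
    have hsub : ∀ u ∈ S, NoutF D u \ S ⊆ (N2F D v).filter fun w => D u w := by
      intro u hu w hw
      rcases (hmemS u).mp hu with ⟨huv, hvu⟩
      rw [Finset.mem_sdiff] at hw
      obtain ⟨hw1, hw2⟩ := hw
      simp only [NoutF, Finset.mem_filter, Finset.mem_univ, true_and] at hw1
      obtain ⟨hwu, hDuw⟩ := hw1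
      have hwv : w ≠ v := by
        rintro rfl; exact hasym _ _ hvu hDuw
      have hwnout : w ∉ outNbr D v := by
        intro hmem
        exact hw2 ((hmemS w).mpr ⟨hmem.1, hmem.2⟩)
      simp only [Finset.mem_filter, N2F, Finset.mem_univ, true_and]
      refine ⟨⟨?_, u, ⟨huv, hvu⟩, hDuw⟩, hDuw⟩
      simp only [Set.mem_insert_iff]
      push_neg
      exact ⟨hwv, hwnout⟩
    have hchain : ∑ u ∈ S, (NoutF D u \ S).card
        ≤ ∑ w ∈ N2F D v, (S.filter fun u => D u w).card := by
      calc ∑ u ∈ S, (NoutF D u \ S).card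
          ≤ ∑ u ∈ S, ((N2F D v).filter fun w => D u w).card :=
            Finset.sum_le_sum fun u hu => Finset.card_le_card (hsub u hu)
        _ = ∑ w ∈ N2F D v, (S.filter fun u => D u w).card := by
            simp only [Finset.card_filter]
            exact Finset.sum_comm
    have hterm : ∀ w ∈ N2F D v, ((S.filter fun u => D u w).card : ℝ) ≤ d / 2400 := by
      intro w hw
      simp only [N2F, Finset.mem_filter, Finset.mem_univ, true_and] at hw
      have hwv : w ≠ v := by
        intro h; exact hw.1 (by simp [h])
      refine le_trans ?_ (hcod w v hwv)
      have : (S.filter fun u => D u w) ⊆ CodF G w v := by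
        intro u hu
        rw [Finset.mem_filter] at hu
        obtain ⟨huS, hDuw⟩ := hu
        rcases (hmemS u).mp huS with ⟨huv, hvu⟩
        have huw : u ≠ w := by rintro rfl; exact hasym _ _ hDuw hDuw
        simp only [CodF, Finset.mem_filter, Finset.mem_univ, true_and]
        exact ⟨huw, huv, (hadj _ _ hDuw).symm, (hadj _ _ hvu).symm⟩
      exact_mod_cast Finset.card_le_card this
    calc (∑ u ∈ S, ((NoutF D u \ S).card : ℝ))
        ≤ ∑ w ∈ N2F D v, ((S.filter fun u => D u w).card : ℝ) := by
          exact_mod_cast hchain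
      _ ≤ ∑ _w ∈ N2F D v, (d / 2400) := Finset.sum_le_sum hterm
      _ = (N2F D v).card * (d / 2400) := by rw [Finset.sum_const, nsmul_eq_mul]
      _ ≤ (4 * d) * (d / 2400) := mul_le_mul_of_nonneg_right (hN2 v) (by positivity)
      _ = d ^ 2 / 600 := by ring
  calc ∑ u ∈ S, ((NoutF D u).card : ℝ)
      = (∑ u ∈ S, ((NoutF D u ∩ S).card : ℝ)) + ∑ u ∈ S, ((NoutF D u \ S).card : ℝ) := by
        rw [← Finset.sum_add_distrib]
        apply Finset.sum_congr rfl
        intro u _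
        rw [hsplit u]; push_cast; ring
    _ ≤ d ^ 2 / 1200 + d ^ 2 / 600 := add_le_add hP1 hP2
    _ = d ^ 2 / 400 := by ring


lemma exists_big_N2 (hn : 3 ≤ n) (d : ℝ) (hd : 0 < d)
    (G : SimpleGraph (Fin n))
    (ha : ∀ u v : Fin n, u ≠ v →
      (({w | w ≠ u ∧ w ≠ v ∧ G.Adj u w ∧ G.Adj w v}).ncard : ℝ) < d / 2400)
    (hb : ∀ v, ((G.neighborSet v).ncard : ℝ) ≤ 4 * d)
    (hc : ∀ A : Set (Fin n), A.ncard = ⌈(n : ℝ) / 3⌉₊ →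
      (n : ℝ) * d / 25 ≤ (eIn G A : ℝ))
    (D : Fin n → Fin n → Prop) (hD : Orients D G) :
    ∃ v, 4 * d < ((outNbr2 D v).ncard : ℝ) := by
  by_contra hcon
  push_neg at hcon
  -- bridges
  have hcod : ∀ u v : Fin n, u ≠ v → ((CodF G u v).card : ℝ) ≤ d / 2400 := by
    intro u v huv
    have := ha u v huv
    rw [ncard_Cod] at this
    exact this.le
  have hdeg : ∀ v, ((univ.filter fun w => G.Adj v w : Finset (Fin n)).card : ℝ) ≤ 4 * d := by
    intro v
    have := hb v
    rwa [ncard_nbhd] at this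
  have hN2 : ∀ v, ((N2F D v).card : ℝ) ≤ 4 * d := by
    intro v
    have := hcon v
    rwa [ncard_outNbr2] at this
  have hkey := sum_dplus_le D G hD d hd hcod hdeg hN2
  -- Big and Small vertices
  set Big : Finset (Fin n) := univ.filter fun u => (d / 15 : ℝ) ≤ ((NoutF D u).card : ℝ)
    with hBigDef
  have hBig : ∀ v, ((NoutF D v ∩ Big).card : ℝ) ≤ 3 * d / 80 := by
    intro v
    have h1 : ((NoutF D v ∩ Big).card : ℝ) * (d / 15)
        ≤ ∑ u ∈ NoutF D v, ((NoutF D u).card : ℝ) := by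
      calc ((NoutF D v ∩ Big).card : ℝ) * (d / 15)
          = (NoutF D v ∩ Big).card • (d / 15) := by rw [nsmul_eq_mul]
        _ ≤ ∑ u ∈ NoutF D v ∩ Big, ((NoutF D u).card : ℝ) := by
            refine Finset.card_nsmul_le_sum _ _ _ fun u hu => ?_
            rw [Finset.mem_inter, hBigDef, Finset.mem_filter] at hu
            exact hu.2.2
        _ ≤ ∑ u ∈ NoutF D v, ((NoutF D u).card : ℝ) :=
            Finset.sum_le_sum_of_subset_of_nonneg Finset.inter_subset_left
              fun u _ _ => by positivity
    have h2 : ((NoutF D v ∩ Big).card : ℝ) ≤ (d ^ 2 / 400) / (d / 15) :=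
      (le_div_iff₀ (by positivity)).mpr (le_trans h1 (hkey v))
    calc ((NoutF D v ∩ Big).card : ℝ) ≤ (d ^ 2 / 400) / (d / 15) := h2
      _ = 3 * d / 80 := by field_simp; ring
  have hBigSum : ∑ b ∈ Big, ((NinF D b).card : ℝ) ≤ n * (3 * d / 80) := by
    have hswap : ∑ b ∈ Big, (NinF D b).card
        = ∑ w ∈ (univ : Finset (Fin n)), (Big.filter fun b => w ≠ b ∧ D w b).card := by
      simp only [NinF, Finset.card_filter]
      exact Finset.sum_comm
    have hterm : ∀ w : Fin n, ((Big.filter fun b => w ≠ b ∧ D w b).card : ℝ) ≤ 3 * d / 80 := by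
      intro w
      refine le_trans ?_ (hBig w)
      have hsub : (Big.filter fun b => w ≠ b ∧ D w b) ⊆ NoutF D w ∩ Big := by
        intro b hb'
        rw [Finset.mem_filter] at hb'
        rw [Finset.mem_inter]
        refine ⟨?_, hb'.1⟩
        simp only [NoutF, Finset.mem_filter, Finset.mem_univ, true_and]
        exact ⟨hb'.2.1.symm, hb'.2.2⟩
      exact_mod_cast Finset.card_le_card hsub
    calc ∑ b ∈ Big, ((NinF D b).card : ℝ)
        = ∑ w ∈ (univ : Finset (Fin n)), ((Big.filter fun b => w ≠ b ∧ D w b).card : ℝ) := by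
          exact_mod_cast congrArg (Nat.cast : ℕ → ℝ) hswap
      _ ≤ ∑ _w ∈ (univ : Finset (Fin n)), (3 * d / 80 : ℝ) :=
          Finset.sum_le_sum fun w _ => hterm w
      _ = n * (3 * d / 80) := by
          rw [Finset.sum_const, nsmul_eq_mul, Finset.card_univ, Fintype.card_fin]
  -- arithmetic on m
  set m : ℕ := ⌈(n : ℝ) / 3⌉₊ with hmDef
  have hm1 : 1 ≤ m := by
    have hnpos : (0 : ℝ) < (n : ℝ) / 3 := by
      have : (0 : ℝ) < n := by exact_mod_cast Nat.lt_of_lt_of_le (by norm_num) hn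
      positivity
    exact Nat.ceil_pos.mpr hnpos
  have hm3 : 3 * m ≤ n + 2 := by
    have h1 : (n : ℝ) / 3 ≤ (((n + 2) / 3 : ℕ) : ℝ) := by
      have hnat : n ≤ 3 * ((n + 2) / 3) := by omega
      have : (n : ℝ) ≤ 3 * (((n + 2) / 3 : ℕ) : ℝ) := by exact_mod_cast hnat
      linarith
    have := Nat.ceil_le.mpr h1
    omega
  have hnd : 3 * d ≤ (n : ℝ) * d := by
    have : (3 : ℝ) ≤ n := by exact_mod_cast hn
    nlinarith
  set Small : Finset (Fin n) := univ.filter fun u =>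
      ¬ ((d / 15 : ℝ) ≤ ((NoutF D u).card : ℝ)) with hSmallDef
  have hsplitcard : Big.card + Small.card = n := by
    rw [hBigDef, hSmallDef]
    have := Finset.card_filter_add_card_filter_not
      (s := (univ : Finset (Fin n))) (p := fun u => (d / 15 : ℝ) ≤ ((NoutF D u).card : ℝ))
    rw [Finset.card_univ, Fintype.card_fin] at this
    exact this
  have hmR : (m : ℝ) ≤ ((n : ℝ) + 2) / 3 := by
    have h0 : ((3 * m : ℕ) : ℝ) ≤ ((n + 2 : ℕ) : ℝ) := by exact_mod_cast hm3
    push_cast at h0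
    linarith
  by_cases hcase : m ≤ Small.card
  · -- many small-outdegree vertices
    obtain ⟨A, hAsub, hAcard⟩ := Finset.exists_subset_card_eq hcase
    have hcA := hc ↑A (by rw [Set.ncard_coe_finset, hAcard])
    have h1 : (eIn G ↑A : ℝ) ≤ ∑ a ∈ A, ((NoutF D a).card : ℝ) := by
      exact_mod_cast eIn_le_sum_dplus D G hD A
    have h2 : ∑ a ∈ A, ((NoutF D a).card : ℝ) ≤ (A.card : ℝ) * (d / 15) := by
      have h := Finset.sum_le_card_nsmul A (fun a => ((NoutF D a).card : ℝ)) (d / 15)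
        (fun a haA => by
          have hmem := hAsub haA
          rw [hSmallDef, Finset.mem_filter] at hmem
          exact (lt_of_not_ge hmem.2).le)
      rwa [nsmul_eq_mul] at h
    have h3 : (A.card : ℝ) * (d / 15) ≤ (((n : ℝ) + 2) / 3) * (d / 15) := by
      rw [hAcard]
      exact mul_le_mul_of_nonneg_right hmR (by positivity)
    have hfin : (n : ℝ) * d / 25 ≤ (((n : ℝ) + 2) / 3) * (d / 15) :=
      le_trans hcA (le_trans h1 (le_trans h2 h3))
    nlinarith [hnd, hd, hfin]
  · -- many big-outdegree vertices
    have hBigcard : m ≤ Big.card := by omega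
    obtain ⟨A, hAsub, hAcard⟩ := Finset.exists_subset_card_eq hBigcard
    have hcA := hc ↑A (by rw [Set.ncard_coe_finset, hAcard])
    have h1 : (eIn G ↑A : ℝ) ≤ ∑ a ∈ A, ((NinF D a).card : ℝ) := by
      exact_mod_cast eIn_le_sum_dminus D G hD A
    have h2 : ∑ a ∈ A, ((NinF D a).card : ℝ) ≤ ∑ b ∈ Big, ((NinF D b).card : ℝ) :=
      Finset.sum_le_sum_of_subset_of_nonneg hAsub fun b _ _ => by positivity
    have hfin : (n : ℝ) * d / 25 ≤ (n : ℝ) * (3 * d / 80) :=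
      le_trans hcA (le_trans h1 (le_trans h2 hBigSum))
    nlinarith [hnd, hd, hfin]


end Stmt16Aux

/-- let `n ≥ 3` and `d > 0`, and let `G` be an `n`-vertex graph in which
(a) any two distinct vertices are joined by fewer than `d/2400` paths of length 2,
(b) all degrees are at most `4d`, and (c) every set of `⌈n/3⌉` vertices induces at least
`nd/25` edges. Then every orientation of `G` has a vertex `v` with `|N2(v)| > 4d`;
in particular, every orientation of `G` has a Sullivan vertex. -/
theorem stmt_16 (n : ℕ) (hn : 3 ≤ n) (d : ℝ) (hd : 0 < d)
    (G : SimpleGraph (Fin n))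
    (ha : ∀ u v : Fin n, u ≠ v →
      (({w | w ≠ u ∧ w ≠ v ∧ G.Adj u w ∧ G.Adj w v}).ncard : ℝ) < d / 2400)
    (hb : ∀ v, ((G.neighborSet v).ncard : ℝ) ≤ 4 * d)
    (hc : ∀ A : Set (Fin n), A.ncard = ⌈(n : ℝ) / 3⌉₊ →
      (n : ℝ) * d / 25 ≤ (eIn G A : ℝ)) :
    ∀ D : Fin n → Fin n → Prop, Orients D G →
      (∃ v, 4 * d < ((outNbr2 D v).ncard : ℝ)) ∧ (∃ v, SullivanVertex D v) := by
  intro D hD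
  have hmain := Stmt16Aux.exists_big_N2 hn d hd G ha hb hc D hD
  refine ⟨hmain, ?_⟩
  obtain ⟨v, hv⟩ := hmain
  refine ⟨v, ?_⟩
  show (inNbr D v).ncard ≤ (outNbr2 D v).ncard
  have hsub : inNbr D v ⊆ G.neighborSet v := by
    intro w hw
    obtain ⟨hwv, hDwv⟩ := hw
    exact ((hD.2 w v).mpr (Or.inl hDwv)).symm
  have h1 : ((inNbr D v).ncard : ℝ) ≤ 4 * d := by
    refine le_trans ?_ (hb v)
    exact_mod_cast Set.ncard_le_ncard hsub (Set.toFinite _)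
  exact_mod_cast le_of_lt (lt_of_le_of_lt h1 hv)
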